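/- For i = 1, 2, let Aᵢ ∈ ℝ^{n×m}, μᵢ ∈ ℝⁿ, and Lᵢ ∈ ℝ^{n×n}. Define Fᵢ : ℝ^m × ℝⁿ → [0,∞] by Fᵢ(x,y) = inf { (1/2)‖z‖² : z ∈ ℝⁿ, y = Aᵢ·x + μᵢ + Lᵢ·z } (infimum in [0,∞], inf ∅ = +∞). If F₁(x,y) = F₂(x,y) for all x ∈ ℝ^m and y ∈ ℝⁿ, then A₁ = A₂, μ₁ = μ₂, and L₁·L₁ᵀ = L₂·L₂ᵀ. -/

import Mathlib

open Matrix
open scoped ENNReal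

private lemma eq_affine_of_inf_eq_zero {n m : ℕ} (A : Matrix (Fin n) (Fin m) ℝ)
    (μ : Fin n → ℝ) (L : Matrix (Fin n) (Fin n) ℝ) (x : Fin m → ℝ) (y : Fin n → ℝ)
    (h : sInf {t : ℝ≥0∞ | ∃ z : Fin n → ℝ, y = A.mulVec x + μ + L.mulVec z ∧
        t = ENNReal.ofReal (2⁻¹ * ∑ i, z i ^ 2)} = 0) :
    y = A.mulVec x + μ := by
  set C : ℝ := ∑ i, ∑ j, (L i j) ^ 2 with hC
  have hC0 : 0 ≤ C := Finset.sum_nonneg fun i _ => Finset.sum_nonneg fun j _ => sq_nonneg _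
  have key : ∀ ε : ℝ, 0 < ε → ∑ i, (y i - (A.mulVec x + μ) i) ^ 2 ≤ 2 * C * ε := by
    intro ε hε
    have h1 : sInf {t : ℝ≥0∞ | ∃ z : Fin n → ℝ, y = A.mulVec x + μ + L.mulVec z ∧
        t = ENNReal.ofReal (2⁻¹ * ∑ i, z i ^ 2)} < ENNReal.ofReal ε := by
      rw [h]; exact ENNReal.ofReal_pos.2 hε
    obtain ⟨t, ⟨z, hz, rfl⟩, ht⟩ := sInf_lt_iff.1 h1
    have hz2 : 2⁻¹ * ∑ i, z i ^ 2 < ε := (ENNReal.ofReal_lt_ofReal_iff hε).1 ht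
    have hsum : ∑ i, (y i - (A.mulVec x + μ) i) ^ 2 ≤ C * ∑ j, z j ^ 2 := by
      have hyi : ∀ i, y i - (A.mulVec x + μ) i = ∑ j, L i j * z j := by
        intro i
        have := congrFun hz i
        simp only [Pi.add_apply, mulVec, dotProduct] at this ⊢
        linarith [this]
      calc ∑ i, (y i - (A.mulVec x + μ) i) ^ 2
          = ∑ i, (∑ j, L i j * z j) ^ 2 := by simp_rw [hyi]
        _ ≤ ∑ i, (∑ j, (L i j) ^ 2) * ∑ j, z j ^ 2 :=
            Finset.sum_le_sum fun i _ =>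
              Finset.sum_mul_sq_le_sq_mul_sq Finset.univ (fun j => L i j) z
        _ = C * ∑ j, z j ^ 2 := by rw [hC, ← Finset.sum_mul]
    have hzsum : ∑ j, z j ^ 2 ≤ 2 * ε := by linarith
    calc ∑ i, (y i - (A.mulVec x + μ) i) ^ 2 ≤ C * ∑ j, z j ^ 2 := hsum
      _ ≤ C * (2 * ε) := by
          exact mul_le_mul_of_nonneg_left hzsum hC0
      _ = 2 * C * ε := by ring
  have hle0 : ∑ i, (y i - (A.mulVec x + μ) i) ^ 2 ≤ 0 := by
    apply le_of_forall_sub_le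
    intro ε hε
    have hε' : 0 < ε / (2 * C + 2) := by positivity
    have := key _ hε'
    have hlt : 2 * C / (2 * C + 2) ≤ 1 := (div_le_one (by positivity)).2 (by linarith)
    have h2 : 2 * C * (ε / (2 * C + 2)) ≤ ε := by
      have : 2 * C * (ε / (2 * C + 2)) = (2 * C / (2 * C + 2)) * ε := by ring
      rw [this]
      calc (2 * C / (2 * C + 2)) * ε ≤ 1 * ε := mul_le_mul_of_nonneg_right hlt hε.le
        _ = ε := one_mul ε
    linarith
  have hall : ∀ i ∈ Finset.univ, (y i - (A.mulVec x + μ) i) ^ 2 = 0 := by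
    intro i _
    have := Finset.sum_eq_zero_iff_of_nonneg
      (s := Finset.univ) (f := fun i => (y i - (A.mulVec x + μ) i) ^ 2)
      (fun i _ => sq_nonneg (y i - (A.mulVec x + μ) i))
    exact this.1 (le_antisymm hle0 (Finset.sum_nonneg fun i _ => sq_nonneg _)) i (Finset.mem_univ i)
  funext i
  have := hall i (Finset.mem_univ i)
  have := pow_eq_zero_iff (n := 2) (by norm_num) |>.1 this
  linarith [sub_eq_zero.1 this]

private lemma transpose_sq_le {n : ℕ} (μ : Fin n → ℝ) (L₁ L₂ : Matrix (Fin n) (Fin n) ℝ)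
    (hF : ∀ y : Fin n → ℝ,
      sInf {t : ℝ≥0∞ | ∃ z : Fin n → ℝ, y = μ + L₁.mulVec z ∧
          t = ENNReal.ofReal (2⁻¹ * ∑ i, z i ^ 2)} =
      sInf {t : ℝ≥0∞ | ∃ z : Fin n → ℝ, y = μ + L₂.mulVec z ∧
          t = ENNReal.ofReal (2⁻¹ * ∑ i, z i ^ 2)})
    (v : Fin n → ℝ) :
    ∑ i, (L₁ᵀ.mulVec v) i ^ 2 ≤ ∑ i, (L₂ᵀ.mulVec v) i ^ 2 := by
  set w : Fin n → ℝ := L₁ᵀ.mulVec v with hw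
  set c₁ : ℝ := ∑ i, w i ^ 2 with hc₁
  set c₂ : ℝ := ∑ i, (L₂ᵀ.mulVec v) i ^ 2 with hc₂
  have hc₁0 : 0 ≤ c₁ := Finset.sum_nonneg fun i _ => sq_nonneg _
  apply le_of_forall_sub_le
  intro ε hε
  have h1 : sInf {t : ℝ≥0∞ | ∃ z : Fin n → ℝ, μ + L₁.mulVec w = μ + L₁.mulVec z ∧
      t = ENNReal.ofReal (2⁻¹ * ∑ i, z i ^ 2)} ≤ ENNReal.ofReal (2⁻¹ * c₁) :=
    sInf_le ⟨w, rfl, rfl⟩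
  have hpos : (0:ℝ) < 2⁻¹ * c₁ + ε / 2 := by linarith
  have h2 : sInf {t : ℝ≥0∞ | ∃ z : Fin n → ℝ, μ + L₁.mulVec w = μ + L₂.mulVec z ∧
      t = ENNReal.ofReal (2⁻¹ * ∑ i, z i ^ 2)} < ENNReal.ofReal (2⁻¹ * c₁ + ε / 2) := by
    rw [← hF]
    exact lt_of_le_of_lt h1 ((ENNReal.ofReal_lt_ofReal_iff hpos).2 (by linarith))
  obtain ⟨t, ⟨z₂, hz₂, rfl⟩, ht⟩ := sInf_lt_iff.1 h2
  have hz2' : 2⁻¹ * ∑ i, z₂ i ^ 2 < 2⁻¹ * c₁ + ε / 2 :=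
    (ENNReal.ofReal_lt_ofReal_iff hpos).1 ht
  have heq : L₂.mulVec z₂ = L₁.mulVec w := (add_right_inj μ).1 hz₂.symm
  have hcalc : c₁ = (L₂ᵀ.mulVec v) ⬝ᵥ z₂ := by
    calc c₁ = w ⬝ᵥ w := by simp [hc₁, dotProduct, sq]
      _ = (v ᵥ* L₁) ⬝ᵥ w := by rw [← mulVec_transpose]
      _ = v ⬝ᵥ L₁.mulVec w := (dotProduct_mulVec v L₁ w).symm
      _ = v ⬝ᵥ L₂.mulVec z₂ := by rw [heq]
      _ = (v ᵥ* L₂) ⬝ᵥ z₂ := dotProduct_mulVec _ _ _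
      _ = (L₂ᵀ.mulVec v) ⬝ᵥ z₂ := by rw [mulVec_transpose]
  have hsum : (L₂ᵀ.mulVec v) ⬝ᵥ z₂ ≤ 2⁻¹ * c₂ + 2⁻¹ * ∑ i, z₂ i ^ 2 := by
    rw [dotProduct, hc₂, Finset.mul_sum, Finset.mul_sum, ← Finset.sum_add_distrib]
    exact Finset.sum_le_sum fun i _ => by nlinarith [sq_nonneg ((L₂ᵀ.mulVec v) i - z₂ i)]
  linarith

private lemma sym_eq_of_quad {n : ℕ} (M N : Matrix (Fin n) (Fin n) ℝ)
    (hM : Mᵀ = M) (hN : Nᵀ = N)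
    (h : ∀ v : Fin n → ℝ, v ⬝ᵥ M.mulVec v = v ⬝ᵥ N.mulVec v) : M = N := by
  have e : ∀ (P : Matrix (Fin n) (Fin n) ℝ) (a b : Fin n),
      (Pi.single a 1 : Fin n → ℝ) ⬝ᵥ P.mulVec (Pi.single b 1) = P a b := by
    intro P a b
    simp [mulVec_single, single_dotProduct]
  ext i j
  have h1 := h (Pi.single i 1)
  have h2 := h (Pi.single j 1)
  have h3 := h ((Pi.single i 1 : Fin n → ℝ) + Pi.single j 1)
  rw [e, e] at h1 h2
  simp only [mulVec_add, dotProduct_add, add_dotProduct] at h3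
  rw [e, e, e, e, e, e, e, e] at h3
  have hMs : M j i = M i j := by
    calc M j i = Mᵀ i j := (transpose_apply M i j).symm
      _ = M i j := by rw [hM]
  have hNs : N j i = N i j := by
    calc N j i = Nᵀ i j := (transpose_apply N i j).symm
      _ = N i j := by rw [hN]
  linarith

/-- A Gaussian map is determined by its quadratic relation: if the functions
`(x,y) ↦ inf { ½‖z‖² : y = Aᵢ x + μᵢ + Lᵢ z }` agree for `i = 1, 2`, then
`A₁ = A₂`, `μ₁ = μ₂` and `L₁L₁ᵀ = L₂L₂ᵀ`. -/
theorem gaussian_map_determined_by_quadratic_relation {n m : ℕ}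
    (A₁ A₂ : Matrix (Fin n) (Fin m) ℝ) (μ₁ μ₂ : Fin n → ℝ)
    (L₁ L₂ : Matrix (Fin n) (Fin n) ℝ)
    (hF : ∀ (x : Fin m → ℝ) (y : Fin n → ℝ),
      sInf {t : ℝ≥0∞ | ∃ z : Fin n → ℝ, y = A₁.mulVec x + μ₁ + L₁.mulVec z ∧
          t = ENNReal.ofReal (2⁻¹ * ∑ i, z i ^ 2)} =
        sInf {t : ℝ≥0∞ | ∃ z : Fin n → ℝ, y = A₂.mulVec x + μ₂ + L₂.mulVec z ∧
          t = ENNReal.ofReal (2⁻¹ * ∑ i, z i ^ 2)}) :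
    A₁ = A₂ ∧ μ₁ = μ₂ ∧ L₁ * L₁ᵀ = L₂ * L₂ᵀ := by
  -- Step 1: the affine parts agree.
  have hμA : ∀ x : Fin m → ℝ, A₁.mulVec x + μ₁ = A₂.mulVec x + μ₂ := by
    intro x
    have h0 : sInf {t : ℝ≥0∞ | ∃ z : Fin n → ℝ,
        A₁.mulVec x + μ₁ = A₁.mulVec x + μ₁ + L₁.mulVec z ∧
        t = ENNReal.ofReal (2⁻¹ * ∑ i, z i ^ 2)} = 0 := by
      refine le_antisymm ?_ zero_le
      refine sInf_le ⟨0, by simp, by simp⟩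
    rw [hF x] at h0
    exact eq_affine_of_inf_eq_zero A₂ μ₂ L₂ x _ h0
  have hμ : μ₁ = μ₂ := by
    have := hμA 0
    simpa [mulVec_zero] using this
  have hA : A₁ = A₂ := by
    have hAx : ∀ x : Fin m → ℝ, A₁.mulVec x = A₂.mulVec x := by
      intro x
      have := hμA x
      rw [hμ] at this
      exact add_right_cancel this
    ext i j
    have := congrFun (hAx (Pi.single j 1)) i
    simpa [mulVec_single] using this
  -- Step 2: the covariances agree.
  subst hμ hA
  refine ⟨rfl, rfl, ?_⟩
  have hF0 : ∀ y : Fin n → ℝ,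
      sInf {t : ℝ≥0∞ | ∃ z : Fin n → ℝ, y = μ₁ + L₁.mulVec z ∧
          t = ENNReal.ofReal (2⁻¹ * ∑ i, z i ^ 2)} =
      sInf {t : ℝ≥0∞ | ∃ z : Fin n → ℝ, y = μ₁ + L₂.mulVec z ∧
          t = ENNReal.ofReal (2⁻¹ * ∑ i, z i ^ 2)} := by
    intro y
    have := hF 0 y
    simpa [mulVec_zero] using this
  have hq : ∀ v : Fin n → ℝ, ∑ i, (L₁ᵀ.mulVec v) i ^ 2 = ∑ i, (L₂ᵀ.mulVec v) i ^ 2 := by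
    intro v
    exact le_antisymm (transpose_sq_le μ₁ L₁ L₂ hF0 v)
      (transpose_sq_le μ₁ L₂ L₁ (fun y => (hF0 y).symm) v)
  have hquad : ∀ (L : Matrix (Fin n) (Fin n) ℝ) (v : Fin n → ℝ),
      v ⬝ᵥ (L * Lᵀ).mulVec v = ∑ i, (Lᵀ.mulVec v) i ^ 2 := by
    intro L v
    rw [← mulVec_mulVec, dotProduct_mulVec, ← mulVec_transpose]
    simp [dotProduct, sq]
  refine sym_eq_of_quad _ _ (by rw [transpose_mul, transpose_transpose])
    (by rw [transpose_mul, transpose_transpose]) fun v => ?_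
  rw [hquad, hquad]
  exact hq v
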